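/- Let I be an interval partition with |I_n| ≥ 2^n for all n. Fix a polynomial p and let X_p = {A ∈ I_poly(I) : ∀m, |I_m ∩ A| ≤ p(m)}. Then for every infinite Y ⊆ X_p there is a countably infinite family {B_m : m ∈ ω} ⊆ Y of distinct sets whose union ⋃_m B_m belongs to I_poly(I); in fact |I_i ∩ ⋃_m B_m| ≤ (i+1)·p(i) for all i. -/
import Mathlib


/-- The ideal `I_poly(I)` of an interval partition determined by `k`. -/
def IPoly (k : ℕ → ℕ) : Set (Set ℕ) :=
  {A | ∃ p : Polynomial ℤ,
      ∀ n : ℕ, ((Set.Ico (k n) (k (n + 1)) ∩ A).ncard : ℤ) ≤ p.eval (n : ℤ)}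

/-- Refinement lemma: any infinite family of subsets of ℕ has an infinite subfamily whose
members all agree below `n`. -/
lemma refine_agree (n : ℕ) {S : Set (Set ℕ)} (hS : S.Infinite) :
    ∃ T, T ⊆ S ∧ T.Infinite ∧ ∀ A ∈ T, ∀ B ∈ T, A ∩ Set.Iio n = B ∩ Set.Iio n := by
  classical
  haveI := hS.to_subtype
  obtain ⟨y, hy⟩ := Finite.exists_infinite_fiber
    (fun A : S => fun i : Fin n => decide ((i : ℕ) ∈ (A : Set ℕ)))
  set f : S → (Fin n → Bool) := fun A => fun i : Fin n => decide ((i : ℕ) ∈ (A : Set ℕ))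
  refine ⟨Subtype.val '' (f ⁻¹' {y}), ?_, ?_, ?_⟩
  · rintro x ⟨A, -, rfl⟩; exact A.2
  · have : (f ⁻¹' {y} : Set S).Infinite := Set.infinite_coe_iff.mp hy
    exact this.image (Set.injOn_of_injective Subtype.val_injective)
  · rintro A ⟨A', hA', rfl⟩ B ⟨B', hB', rfl⟩
    have hfy : f A' = f B' := by
      simp only [Set.mem_preimage, Set.mem_singleton_iff] at hA' hB'
      rw [hA', hB']
    ext x
    simp only [Set.mem_inter_iff, Set.mem_Iio]
    constructor
    · rintro ⟨hx, hxn⟩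
      refine ⟨?_, hxn⟩
      have := congrFun hfy ⟨x, hxn⟩
      simp only [f, decide_eq_decide] at this
      exact this.mp hx
    · rintro ⟨hx, hxn⟩
      refine ⟨?_, hxn⟩
      have := congrFun hfy ⟨x, hxn⟩
      simp only [f, decide_eq_decide] at this
      exact this.mpr hx

/-- From a sequence of infinite sets pick an injective choice sequence. -/
lemma exists_injective_choice {α : Type*} (Z : ℕ → Set α) (hZ : ∀ m, (Z m).Infinite) :
    ∃ B : ℕ → α, Function.Injective B ∧ ∀ m, B m ∈ Z m := by
  classical
  have P : ∀ (m : ℕ) (s : Finset α), ∃ x, x ∈ Z m ∧ x ∉ s := by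
    intro m s
    obtain ⟨x, hx⟩ := ((hZ m).diff s.finite_toSet).nonempty
    exact ⟨x, hx.1, hx.2⟩
  choose pick hp1 hp2 using P
  let g : ℕ → Finset α := fun m => Nat.rec ∅ (fun m s => insert (pick m s) s) m
  set B : ℕ → α := fun m => pick m (g m) with hB
  have hg : ∀ m, g (m + 1) = insert (B m) (g m) := fun m => rfl
  have hmem : ∀ m, B m ∈ g (m + 1) := fun m => by rw [hg]; exact Finset.mem_insert_self _ _
  have hmono : ∀ m n, m ≤ n → g m ⊆ g n := by
    intro m n hmn
    induction n with
    | zero => simpa [Nat.le_zero.mp hmn] using Finset.Subset.refl _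
    | succ n ih =>
      rcases Nat.lt_or_ge m (n + 1) with h | h
      · exact (ih (Nat.lt_succ_iff.mp h)).trans (by rw [hg]; exact Finset.subset_insert _ _)
      · have : m = n + 1 := le_antisymm hmn h
        subst this; exact Finset.Subset.refl _
  have hnot : ∀ m, B m ∉ g m := fun m => hp2 m (g m)
  refine ⟨B, ?_, fun m => hp1 m (g m)⟩
  intro a b hab
  by_contra hne
  rcases Nat.lt_or_ge a b with h | h
  · exact hnot b (hab ▸ hmono (a + 1) b h (hmem a))
  · have h' : b < a := lt_of_le_of_ne h (Ne.symm hne)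
    exact hnot a (hab ▸ hmono (b + 1) a h' (hmem b))

 
/-- For an interval partition with `|I_n| ≥ 2^n` and a fixed integer
polynomial `p`, let `X_p = {A ∈ I_poly : ∀ m, |I_m ∩ A| ≤ p(m)}`. Every infinite
`Y ⊆ X_p` contains a countably infinite family of distinct sets `B m` whose union lies
in `I_poly(I)`; in fact `|I_i ∩ ⋃ m, B m| ≤ (i+1)·p(i)` for all `i`. -/


theorem iPoly_closed_piece_pseudobounded (k : ℕ → ℕ) (h0 : k 0 = 0)
    (hmono : StrictMono k) (hsize : ∀ n : ℕ, 2 ^ n ≤ k (n + 1) - k n)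
    (p : Polynomial ℤ)
    (Y : Set (Set ℕ))
    (hY : Y ⊆ {A ∈ IPoly k |
      ∀ m : ℕ, ((Set.Ico (k m) (k (m + 1)) ∩ A).ncard : ℤ) ≤ p.eval (m : ℤ)})
    (hYinf : Y.Infinite) :
    ∃ B : ℕ → Set ℕ, Function.Injective B ∧ (∀ m, B m ∈ Y) ∧
      (∀ i : ℕ, ((Set.Ico (k i) (k (i + 1)) ∩ ⋃ m, B m).ncard : ℤ) ≤
        ((i : ℤ) + 1) * p.eval (i : ℤ)) ∧
      (⋃ m, B m) ∈ IPoly k := by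
  classical
  -- Build a decreasing chain Z of infinite subsets of Y with agreement below k (m+1).
  have step : ∀ (m : ℕ) (S : Set (Set ℕ)), S.Infinite →
      ∃ T, T ⊆ S ∧ T.Infinite ∧ ∀ A ∈ T, ∀ B ∈ T,
        A ∩ Set.Iio (k (m + 1)) = B ∩ Set.Iio (k (m + 1)) := fun m S hS =>
    refine_agree (k (m + 1)) hS
  -- recursive construction of the chain, carrying the invariant
  have chain : ∀ m : ℕ, ∃ ZZ : ℕ → Set (Set ℕ), True := fun _ => ⟨fun _ => ∅, trivial⟩
  clear chain
  let Z : ℕ → Set (Set ℕ) := fun m => Nat.rec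
    (if h : True then Classical.choose (step 0 Y hYinf) else ∅)
    (fun m T => if h : T.Infinite then Classical.choose (step (m + 1) T h) else ∅) m
  have hZ0 : Z 0 = Classical.choose (step 0 Y hYinf) := by simp [Z]
  have hZinv : ∀ m, Z m ⊆ Y ∧ (Z m).Infinite ∧ ∀ A ∈ Z m, ∀ B ∈ Z m,
      A ∩ Set.Iio (k (m + 1)) = B ∩ Set.Iio (k (m + 1)) := by
    intro m
    induction m with
    | zero =>
      rw [hZ0]
      obtain ⟨h1, h2, h3⟩ := Classical.choose_spec (step 0 Y hYinf)
      exact ⟨h1, h2, h3⟩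
    | succ m ih =>
      obtain ⟨ih1, ih2, ih3⟩ := ih
      have hZs : Z (m + 1) = Classical.choose (step (m + 1) (Z m) ih2) := by
        show (if h : (Z m).Infinite then _ else ∅) = _
        rw [dif_pos ih2]
      rw [hZs]
      obtain ⟨h1, h2, h3⟩ := Classical.choose_spec (step (m + 1) (Z m) ih2)
      exact ⟨h1.trans ih1, h2, h3⟩
  have hZsub : ∀ m, Z (m + 1) ⊆ Z m := by
    intro m
    have hZs : Z (m + 1) = Classical.choose (step (m + 1) (Z m) (hZinv m).2.1) := by
      show (if h : (Z m).Infinite then _ else ∅) = _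
      rw [dif_pos (hZinv m).2.1]
    rw [hZs]
    exact (Classical.choose_spec (step (m + 1) (Z m) (hZinv m).2.1)).1
  have hZle : ∀ i m, i ≤ m → Z m ⊆ Z i := by
    intro i m him
    induction m with
    | zero => simp_all
    | succ m ih =>
      rcases Nat.lt_or_ge i (m + 1) with h | h
      · exact (hZsub m).trans (ih (Nat.lt_succ_iff.mp h))
      · have : i = m + 1 := le_antisymm him h
        subst this; exact fun _ h => h
  -- pick distinct B m ∈ Z m
  obtain ⟨B, hBinj, hBmem⟩ := exists_injective_choice Z (fun m => (hZinv m).2.1)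
  have hBY : ∀ m, B m ∈ Y := fun m => (hZinv m).1 (hBmem m)
  -- agreement: for m ≥ i, B m agrees with B i below k (i+1)
  have hagree : ∀ i m, i ≤ m → B m ∩ Set.Iio (k (i + 1)) = B i ∩ Set.Iio (k (i + 1)) :=
    fun i m him => (hZinv i).2.2 _ (hZle i m him (hBmem m)) _ (hBmem i)
  -- key identity
  have hkey : ∀ i : ℕ, Set.Ico (k i) (k (i + 1)) ∩ ⋃ m, B m =
      ⋃ m ∈ Finset.range (i + 1), Set.Ico (k i) (k (i + 1)) ∩ B m := by
    intro i
    ext x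
    simp only [Set.mem_inter_iff, Set.mem_iUnion, Finset.mem_range, Set.mem_Ico]
    constructor
    · rintro ⟨⟨hx1, hx2⟩, m, hm⟩
      rcases Nat.lt_or_ge m (i + 1) with h | h
      · exact ⟨m, h, ⟨hx1, hx2⟩, hm⟩
      · refine ⟨i, Nat.lt_succ_self i, ⟨hx1, hx2⟩, ?_⟩
        have hx : x ∈ B m ∩ Set.Iio (k (i + 1)) := ⟨hm, hx2⟩
        rw [hagree i m (Nat.le_of_succ_le h)] at hx
        exact hx.1
    · rintro ⟨m, hm, ⟨hx1, hx2⟩, hxB⟩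
      exact ⟨⟨hx1, hx2⟩, m, hxB⟩
  -- cardinality bound for finite unions
  have hbound : ∀ i : ℕ, ((Set.Ico (k i) (k (i + 1)) ∩ ⋃ m, B m).ncard : ℤ) ≤
      ((i : ℤ) + 1) * p.eval (i : ℤ) := by
    intro i
    rw [hkey i]
    have hterm : ∀ m, ((Set.Ico (k i) (k (i + 1)) ∩ B m).ncard : ℤ) ≤ p.eval (i : ℤ) :=
      fun m => (hY (hBY m)).2 i
    have main : ∀ n : ℕ, ((⋃ m ∈ Finset.range n, Set.Ico (k i) (k (i + 1)) ∩ B m).ncard : ℤ)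
        ≤ (n : ℤ) * p.eval (i : ℤ) := by
      intro n
      induction n with
      | zero => simp
      | succ n ih =>
        rw [Finset.range_add_one]
        rw [show (⋃ m ∈ insert n (Finset.range n), Set.Ico (k i) (k (i + 1)) ∩ B m) =
            (Set.Ico (k i) (k (i + 1)) ∩ B n) ∪
            ⋃ m ∈ Finset.range n, Set.Ico (k i) (k (i + 1)) ∩ B m by
          simp [Set.biUnion_insert]]
        calc (((Set.Ico (k i) (k (i + 1)) ∩ B n) ∪
              ⋃ m ∈ Finset.range n, Set.Ico (k i) (k (i + 1)) ∩ B m).ncard : ℤ)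
            ≤ ((Set.Ico (k i) (k (i + 1)) ∩ B n).ncard : ℤ) +
              ((⋃ m ∈ Finset.range n, Set.Ico (k i) (k (i + 1)) ∩ B m).ncard : ℤ) := by
              exact_mod_cast Set.ncard_union_le _ _
          _ ≤ p.eval (i : ℤ) + (n : ℤ) * p.eval (i : ℤ) := add_le_add (hterm n) ih
          _ = ((n : ℤ) + 1) * p.eval (i : ℤ) := by ring
    calc ((⋃ m ∈ Finset.range (i + 1), Set.Ico (k i) (k (i + 1)) ∩ B m).ncard : ℤ)
        ≤ ((i + 1 : ℕ) : ℤ) * p.eval (i : ℤ) := main (i + 1)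
      _ = ((i : ℤ) + 1) * p.eval (i : ℤ) := by push_cast; ring
  refine ⟨B, hBinj, hBY, hbound, ⟨(Polynomial.X + 1) * p, ?_⟩⟩
  intro n
  have := hbound n
  simpa using this
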